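/- arXiv:1603.04660 — 7 statements merged into one kernel-verified Lean document; each statement's English description precedes it below -/
import Mathlib

section
/- If (N_f)^{N_f}/N_f! < e^{λπr_c²/β}, then the vector p*_c(i) = (β/(λπr_c² N_f))·Σ_{j=1}^{N_f} ln(j/i) + 1/N_f, for i = 1,…,N_f, has all entries positive and sums to 1; i.e., it is a valid probability distribution on {1,…,N_f}. -/
open Real Finset

theorem optimal_caching_valid_distribution (N : ℕ) (hN : 0 < N)
    (β lam rc : ℝ) (hβ : 0 < β) (hlam : 0 < lam) (hrc : 0 < rc)
    (hcond : (N : ℝ) ^ N / (Nat.factorial N) < Real.exp (lam * π * rc ^ 2 / β)) :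
    (∀ i ∈ Finset.Icc 1 N,
      0 < β / (lam * π * rc ^ 2 * N) * (∑ j ∈ Finset.Icc 1 N, Real.log ((j : ℝ) / i)) + 1 / N) ∧
    ∑ i ∈ Finset.Icc 1 N,
      (β / (lam * π * rc ^ 2 * N) * (∑ j ∈ Finset.Icc 1 N, Real.log ((j : ℝ) / i)) + 1 / N) = 1 := by
  have hNR : (0:ℝ) < N := Nat.cast_pos.mpr hN
  have hπ : (0:ℝ) < π := Real.pi_pos
  have hA : (0:ℝ) < lam * π * rc ^ 2 := by positivity
  have hAN : (0:ℝ) < lam * π * rc ^ 2 * N := by positivity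
  have hfac : (0:ℝ) < (Nat.factorial N : ℝ) := by
    exact_mod_cast Nat.factorial_pos N
  set S : ℝ := ∑ j ∈ Finset.Icc 1 N, Real.log j with hS
  have hprod : ∏ j ∈ Finset.Icc 1 N, j = Nat.factorial N := by
    rw [← Finset.Ico_add_one_right_eq_Icc, Finset.prod_Ico_eq_prod_range]
    simpa [add_comm] using Finset.prod_range_add_one_eq_factorial N
  have hlogfac : Real.log (Nat.factorial N : ℝ) = S := by
    rw [← hprod, Nat.cast_prod, Real.log_prod]
    intro j hj
    have hj1 : 1 ≤ j := (Finset.mem_Icc.mp hj).1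
    exact Nat.cast_ne_zero.mpr (by omega)
  have hsum : ∀ i ∈ Finset.Icc 1 N,
      ∑ j ∈ Finset.Icc 1 N, Real.log ((j : ℝ) / i)
        = S - N * Real.log i := by
    intro i hi
    have hi1 : 1 ≤ i := (Finset.mem_Icc.mp hi).1
    have hiR : (0:ℝ) < i := by exact_mod_cast hi1
    have h1 : ∀ j ∈ Finset.Icc 1 N, Real.log ((j:ℝ)/i) = Real.log j - Real.log i := by
      intro j hj
      have hj1 : 1 ≤ j := (Finset.mem_Icc.mp hj).1
      rw [Real.log_div (Nat.cast_ne_zero.mpr (by omega)) (ne_of_gt hiR)]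
    rw [Finset.sum_congr rfl h1, Finset.sum_sub_distrib, Finset.sum_const, Nat.card_Icc]
    simp [nsmul_eq_mul, hS]
  have hkey : (N:ℝ) * Real.log N - S < lam * π * rc ^ 2 / β := by
    have h := Real.log_lt_log (by positivity) hcond
    rw [Real.log_exp, Real.log_div (by positivity) (ne_of_gt hfac), Real.log_pow, hlogfac] at h
    exact h
  have hβkey : β * ((N:ℝ) * Real.log N - S) < lam * π * rc ^ 2 := by
    rw [lt_div_iff₀ hβ] at hkey
    nlinarith
  have hnum : 0 < β * (S - (N:ℝ) * Real.log N) + lam * π * rc ^ 2 := by nlinarith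
  have hbase : 0 < β / (lam * π * rc ^ 2 * N) * (S - (N:ℝ) * Real.log N) + 1 / N := by
    have heq : β / (lam * π * rc ^ 2 * N) * (S - (N:ℝ) * Real.log N) + 1 / N
        = (β * (S - (N:ℝ) * Real.log N) + lam * π * rc ^ 2) / (lam * π * rc ^ 2 * N) := by
      field_simp
    rw [heq]
    exact div_pos hnum hAN
  constructor
  · intro i hi
    have hi1 : 1 ≤ i := (Finset.mem_Icc.mp hi).1
    have hiN : i ≤ N := (Finset.mem_Icc.mp hi).2
    have hiR : (0:ℝ) < i := by exact_mod_cast hi1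
    have hlogle : Real.log i ≤ Real.log N :=
      Real.log_le_log hiR (by exact_mod_cast hiN)
    rw [hsum i hi]
    have hcnonneg : 0 ≤ β / (lam * π * rc ^ 2 * N) := by positivity
    have hmono : β / (lam * π * rc ^ 2 * N) * (S - (N:ℝ) * Real.log N)
        ≤ β / (lam * π * rc ^ 2 * N) * (S - (N:ℝ) * Real.log i) := by
      apply mul_le_mul_of_nonneg_left _ hcnonneg
      nlinarith
    linarith
  · rw [Finset.sum_congr rfl (fun i hi => by rw [hsum i hi])]
    have : ∑ i ∈ Finset.Icc 1 N, (β / (lam * π * rc ^ 2 * N) * (S - ↑N * Real.log ↑i) + 1 / ↑N)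
        = β / (lam * π * rc ^ 2 * N) * ((N:ℝ) * S - (N:ℝ) * S) + (N:ℝ) * (1 / N) := by
      rw [Finset.sum_add_distrib, ← Finset.mul_sum, Finset.sum_sub_distrib, Finset.sum_const,
        ← Finset.mul_sum, Finset.sum_const, Nat.card_Icc]
      simp [nsmul_eq_mul, hS]
    rw [this]
    field_simp
    ring
end

section
/- Let c = λπr_c² > 0 and x_i = ln(p_r(i))/c where p_r is the Zipf distribution with parameter β > 0 on {1,…,N_f}. If (N_f)^{N_f}/N_f! < e^{c/β}, then the distribution p*_c(i) = (β/(c·N_f))·Σ_{j=1}^{N_f} ln(j/i) + 1/N_f is the unique maximizer of Σ_i p_r(i)(1 − e^{−c·p_i}) over the probability simplex. -/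
open Real Finset

theorem optimal_caching_unique_maximizer (N : ℕ) (hN : 0 < N)
    (β lam rc : ℝ) (hβ : 0 < β) (hlam : 0 < lam) (hrc : 0 < rc)
    (c : ℝ) (hc : c = lam * π * rc ^ 2)
    (pr : Fin N → ℝ)
    (hpr : ∀ i : Fin N, pr i = ((i : ℕ) + 1 : ℝ) ^ (-β) / ∑ k ∈ Finset.Icc 1 N, (k : ℝ) ^ (-β))
    (hcond : (N : ℝ) ^ N / (Nat.factorial N) < Real.exp (c / β))
    (pstar : Fin N → ℝ)
    (hpstar : ∀ i : Fin N,
      pstar i = β / (c * N) * (∑ j ∈ Finset.Icc 1 N, Real.log ((j : ℝ) / ((i : ℕ) + 1))) + 1 / N) :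
    ((∀ i, 0 ≤ pstar i) ∧ ∑ i, pstar i = 1) ∧
    (∀ q : Fin N → ℝ, (∀ i, 0 ≤ q i) → ∑ i, q i = 1 →
      ∑ i, pr i * (1 - Real.exp (-c * q i)) ≤ ∑ i, pr i * (1 - Real.exp (-c * pstar i))) ∧
    (∀ q : Fin N → ℝ, (∀ i, 0 ≤ q i) → ∑ i, q i = 1 →
      ∑ i, pr i * (1 - Real.exp (-c * q i)) = ∑ i, pr i * (1 - Real.exp (-c * pstar i)) →
      q = pstar) := by
  have hc0 : 0 < c := by rw [hc]; have := Real.pi_pos; positivity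
  have hNR : (0:ℝ) < N := by exact_mod_cast hN
  set Z : ℝ := ∑ k ∈ Finset.Icc 1 N, (k : ℝ) ^ (-β) with hZdef
  have hZ : 0 < Z := by
    apply Finset.sum_pos (fun k hk => ?_) ⟨1, Finset.mem_Icc.mpr ⟨le_refl 1, hN⟩⟩
    have h1 := (Finset.mem_Icc.mp hk).1
    have : (0:ℝ) < k := by exact_mod_cast h1
    exact Real.rpow_pos_of_pos this _
  set S : ℝ := ∑ j ∈ Finset.Icc 1 N, Real.log (j : ℝ) with hSdef
  have key1 : ∀ i : Fin N,
      (∑ j ∈ Finset.Icc 1 N, Real.log ((j : ℝ) / ((i : ℕ) + 1))) =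
        S - N * Real.log (((i : ℕ) : ℝ) + 1) := by
    intro i
    have h1 : ∀ j ∈ Finset.Icc 1 N,
        Real.log ((j : ℝ) / ((i : ℕ) + 1)) = Real.log (j : ℝ) - Real.log (((i:ℕ):ℝ) + 1) := by
      intro j hj
      have := (Finset.mem_Icc.mp hj).1
      have hj0 : (j:ℝ) ≠ 0 := by
        have : (0:ℝ) < j := by exact_mod_cast this
        exact this.ne'
      exact Real.log_div hj0 (by positivity)
    rw [Finset.sum_congr rfl h1, Finset.sum_sub_distrib, Finset.sum_const, Nat.card_Icc]
    simp [nsmul_eq_mul]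
    exact hSdef.symm
  set K : ℝ := Real.exp (-(β/N)*S - c/N) / Z with hKdef
  have hK : 0 < K := div_pos (Real.exp_pos _) hZ
  have key : ∀ i : Fin N, pr i * Real.exp (-c * pstar i) = K := by
    intro i
    have hL : (0:ℝ) < ((i:ℕ):ℝ) + 1 := by positivity
    rw [hpr, hpstar, key1 i, Real.rpow_def_of_pos hL]
    rw [div_mul_eq_mul_div, ← Real.exp_add]
    congr 1
    field_simp
    ring
  -- sum pstar = 1
  have hT : ∑ i : Fin N, Real.log (((i:ℕ):ℝ) + 1) = S := by
    rw [Fin.sum_univ_eq_sum_range (fun j => Real.log ((j:ℝ) + 1)), hSdef,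
      ← Finset.Ico_add_one_right_eq_Icc, Finset.sum_Ico_eq_sum_range]
    apply Finset.sum_congr (by norm_num)
    intro j hj
    push_cast
    ring_nf
  have hsum1 : ∑ i, pstar i = 1 := by
    have h1 : ∀ i ∈ (Finset.univ : Finset (Fin N)),
        pstar i = β/(c*N) * S - (β/(c*N)*N) * Real.log (((i:ℕ):ℝ)+1) + 1/N := by
      intro i _
      rw [hpstar, key1]
      ring
    rw [Finset.sum_congr rfl h1]
    rw [Finset.sum_add_distrib, Finset.sum_sub_distrib, Finset.sum_const, ← Finset.mul_sum,
      hT, Finset.sum_const, Finset.card_univ, Fintype.card_fin, nsmul_eq_mul, nsmul_eq_mul]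
    field_simp
    ring
  -- nonnegativity
  have hSfact : S = Real.log ((Nat.factorial N : ℕ) : ℝ) := by
    have h1 : ((Nat.factorial N : ℕ) : ℝ) = ∏ j ∈ Finset.Icc 1 N, (j:ℝ) := by
      rw [← Nat.cast_prod, ← Finset.Ico_add_one_right_eq_Icc, Finset.prod_Ico_id_eq_factorial]
    rw [h1, Real.log_prod]
    intro j hj
    have := (Finset.mem_Icc.mp hj).1
    exact Nat.cast_ne_zero.mpr (by omega)
  have hlog_cond : (N:ℝ) * Real.log N - S < c / β := by
    have hfact : (0:ℝ) < ((Nat.factorial N : ℕ) : ℝ) := by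
      exact_mod_cast N.factorial_pos
    have h1 : Real.log ((N:ℝ)^N / ((Nat.factorial N : ℕ) : ℝ)) < c/β := by
      have h2 := Real.log_lt_log (by positivity) hcond
      rwa [Real.log_exp] at h2
    rwa [Real.log_div (by positivity) hfact.ne', Real.log_pow, ← hSfact] at h1
  have hpos : ∀ i, 0 ≤ pstar i := by
    intro i
    rw [hpstar, key1]
    set L := Real.log (((i:ℕ):ℝ) + 1) with hLdef
    have hL : L ≤ Real.log N := by
      apply Real.log_le_log (by positivity)
      have : (i:ℕ) + 1 ≤ N := i.isLt
      exact_mod_cast this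
    have h2 : β * ((N:ℝ)*Real.log N - S) < c := by
      have h3 := mul_lt_mul_of_pos_left hlog_cond hβ
      rwa [mul_div_cancel₀ _ hβ.ne'] at h3
    have h4 : 0 < β*(S - N*L) + c := by
      nlinarith [mul_le_mul_of_nonneg_left hL (mul_nonneg hβ.le hNR.le)]
    have h5 : β/(c*N)*(S - N*L) + 1/N = (β*(S - N*L) + c)/(c*N) := by
      field_simp
    rw [h5]
    exact div_nonneg h4.le (by positivity)
  -- main inequality machinery
  have term_eq : ∀ (q : Fin N → ℝ) (i : Fin N),
      pr i * Real.exp (-c * q i) = K * Real.exp (-c * (q i - pstar i)) := by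
    intro q i
    rw [show -c * q i = -c * pstar i + -c * (q i - pstar i) by ring, Real.exp_add,
      ← mul_assoc, key i]
  have term_le : ∀ (q : Fin N → ℝ) (i : Fin N),
      K * (-c * (q i - pstar i) + 1) ≤ pr i * Real.exp (-c * q i) := by
    intro q i
    rw [term_eq q i]
    exact mul_le_mul_of_nonneg_left (Real.add_one_le_exp _) hK.le
  have sum_lower : ∀ q : Fin N → ℝ, ∑ i, q i = 1 →
      ∑ i, K * (-c * (q i - pstar i) + 1) = N * K := by
    intro q hq1
    have h1 : ∀ i ∈ (Finset.univ : Finset (Fin N)),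
        K * (-c * (q i - pstar i) + 1) = (K*c)*pstar i - (K*c)*q i + K := by
      intro i _; ring
    rw [Finset.sum_congr rfl h1, Finset.sum_add_distrib, Finset.sum_sub_distrib,
      ← Finset.mul_sum, ← Finset.mul_sum, hq1, hsum1, Finset.sum_const,
      Finset.card_univ, Fintype.card_fin, nsmul_eq_mul]
    ring
  have hNK : ∑ i : Fin N, pr i * Real.exp (-c * pstar i) = N * K := by
    rw [Finset.sum_congr rfl (fun i _ => key i), Finset.sum_const, Finset.card_univ,
      Fintype.card_fin, nsmul_eq_mul]
  have obj : ∀ q : Fin N → ℝ,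
      ∑ i, pr i * (1 - Real.exp (-c * q i)) = (∑ i, pr i) - ∑ i, pr i * Real.exp (-c * q i) := by
    intro q
    rw [← Finset.sum_sub_distrib]
    exact Finset.sum_congr rfl fun i _ => by ring
  refine ⟨⟨hpos, hsum1⟩, ?_, ?_⟩
  · intro q hq0 hq1
    rw [obj, obj]
    have h1 : N * K ≤ ∑ i, pr i * Real.exp (-c * q i) := by
      rw [← sum_lower q hq1]
      exact Finset.sum_le_sum (fun i _ => term_le q i)
    linarith [hNK]
  · intro q hq0 hq1 heq
    funext i
    by_contra hne
    have hx : -c * (q i - pstar i) ≠ 0 := by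
      intro h
      rcases mul_eq_zero.mp h with h' | h'
      · exact absurd h' (neg_ne_zero.mpr hc0.ne')
      · exact hne (sub_eq_zero.mp h')
    have hstrict : K * (-c * (q i - pstar i) + 1) < pr i * Real.exp (-c * q i) := by
      rw [term_eq q i]
      exact mul_lt_mul_of_pos_left (Real.add_one_lt_exp hx) hK
    have hlt : N * K < ∑ j, pr j * Real.exp (-c * q j) := by
      rw [← sum_lower q hq1]
      exact Finset.sum_lt_sum (fun j _ => term_le q j) ⟨i, Finset.mem_univ i, hstrict⟩
    rw [obj, obj] at heq
    have h2 : ∑ j, pr j * Real.exp (-c * q j) = ∑ j, pr j * Real.exp (-c * pstar j) := by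
      linarith
    rw [hNK] at h2
    linarith
end

section
/- Fix c = λπr_c²/β > 0 and an integer N_f ≥ 2. If there exists an integer i* with 1 ≤ i* < N_f satisfying (i*+1)^{i*}/i*! ≥ e^c and (i*)^{i*}/i*! < e^c, then i* satisfies c − 1 ≤ i* ≤ c + ln(√(2π N_f)) + 1. -/
open Real

theorem support_size_bounds (c : ℝ) (hc : 0 < c) (N : ℕ) (hN : 2 ≤ N)
    (istar : ℕ) (h1 : 1 ≤ istar) (h2 : istar < N)
    (hge : ((istar + 1 : ℕ) : ℝ) ^ istar / (Nat.factorial istar) ≥ Real.exp c)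
    (hlt : ((istar : ℕ) : ℝ) ^ istar / (Nat.factorial istar) < Real.exp c) :
    c - 1 ≤ (istar : ℝ) ∧ (istar : ℝ) ≤ c + Real.log (Real.sqrt (2 * π * N)) + 1 := by
  have hi : (1:ℝ) ≤ (istar : ℝ) := by exact_mod_cast h1
  have hipos : (0:ℝ) < istar := by linarith
  constructor
  · -- lower bound
    have h := Real.pow_div_factorial_le_exp (x := ((istar + 1 : ℕ) : ℝ)) (by positivity) istar
    have h' : ((istar + 1 : ℕ) : ℝ) ^ istar / (Nat.factorial istar) ≤ Real.exp ((istar : ℝ) + 1) := by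
      refine h.trans (Real.exp_le_exp.mpr ?_)
      push_cast; linarith
    have := Real.exp_le_exp.mp (le_trans hge h')
    linarith
  · -- upper bound via Stirling
    -- stirlingSeq istar ≤ stirlingSeq 1
    obtain ⟨m, rfl⟩ : ∃ m, istar = m + 1 := ⟨istar - 1, (Nat.succ_pred_eq_of_pos h1).symm⟩
    have hanti := Stirling.log_stirlingSeq'_antitone (Nat.zero_le m)
    simp only [Function.comp] at hanti
    have hpos1 := Stirling.stirlingSeq'_pos 0
    have hposm := Stirling.stirlingSeq'_pos m
    have hseq : Stirling.stirlingSeq (m + 1) ≤ Stirling.stirlingSeq 1 := by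
      have := Real.exp_le_exp.mpr hanti
      rwa [Real.exp_log hposm, Nat.succ_eq_add_one, Real.exp_log (by simpa using hpos1)] at this
    set i : ℕ := m + 1 with hidef
    have hfac : (0:ℝ) < (Nat.factorial i) := by exact_mod_cast i.factorial_pos
    have hsq : (0:ℝ) < Real.sqrt (2 * i) := Real.sqrt_pos.mpr (by positivity)
    have hpow : (0:ℝ) < ((i:ℝ) / Real.exp 1) ^ i := by positivity
    rw [Stirling.stirlingSeq_one, Stirling.stirlingSeq, div_le_div_iff₀ (by positivity) (by positivity)] at hseq
    -- hseq : i ! * √2 ≤ exp 1 * (√(2 i) * (i/e)^i)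
    have hfacle : (Nat.factorial i : ℝ) ≤ Real.exp 1 * Real.sqrt i * ((i:ℝ) / Real.exp 1) ^ i := by
      have h2 : Real.sqrt (2 * i) = Real.sqrt 2 * Real.sqrt i := by
        rw [Real.sqrt_mul (by norm_num)]
      have hs2 : (0:ℝ) < Real.sqrt 2 := by positivity
      nlinarith [Real.sq_sqrt (by norm_num : (0:ℝ) ≤ 2), hseq, Real.sqrt_pos.mpr hipos]
    -- so i^i / i! ≥ exp(i-1)/√i
    have hsqi : (0:ℝ) < Real.sqrt i := Real.sqrt_pos.mpr hipos
    have key : Real.exp ((i:ℝ) - 1) / Real.sqrt i ≤ ((i:ℕ):ℝ) ^ i / (Nat.factorial i) := by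
      rw [div_le_div_iff₀ hsqi hfac]
      have hip : ((i:ℝ) / Real.exp 1) ^ i = (i:ℝ) ^ i / Real.exp i := by
        rw [div_pow, ← Real.exp_nat_mul]; ring_nf
      calc Real.exp ((i:ℝ) - 1) * (Nat.factorial i)
          ≤ Real.exp ((i:ℝ) - 1) * (Real.exp 1 * Real.sqrt i * ((i:ℝ) / Real.exp 1) ^ i) := by
            gcongr
        _ = (i:ℝ) ^ i * Real.sqrt i := by
            rw [hip]
            rw [show Real.exp ((i:ℝ) - 1) * (Real.exp 1 * Real.sqrt i * ((i:ℝ) ^ i / Real.exp i))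
              = (Real.exp ((i:ℝ)-1) * Real.exp 1 / Real.exp i) * ((i:ℝ) ^ i * Real.sqrt i) by ring]
            rw [← Real.exp_add, show (i:ℝ) - 1 + 1 = (i:ℝ) by ring, div_self (Real.exp_pos _).ne']
            ring
    have hkey2 : Real.exp ((i:ℝ) - 1) / Real.sqrt i < Real.exp c := lt_of_le_of_lt key hlt
    -- √i ≤ √(2πN)
    have hπ : (1:ℝ) ≤ 2 * π := by nlinarith [Real.pi_gt_three]
    have hiN : (i:ℝ) ≤ N := by exact_mod_cast h2.le
    have hsle : Real.sqrt i ≤ Real.sqrt (2 * π * N) := by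
      apply Real.sqrt_le_sqrt
      have hN0 : (0:ℝ) ≤ N := by positivity
      nlinarith
    have hsN : (0:ℝ) < Real.sqrt (2 * π * N) := lt_of_lt_of_le hsqi hsle
    have : Real.exp ((i:ℝ) - 1) < Real.exp c * Real.sqrt (2 * π * N) := by
      rw [div_lt_iff₀ hsqi] at hkey2
      calc Real.exp ((i:ℝ) - 1) < Real.exp c * Real.sqrt i := hkey2
        _ ≤ Real.exp c * Real.sqrt (2 * π * N) := by gcongr
    have hfin : Real.exp ((i:ℝ) - 1) < Real.exp (c + Real.log (Real.sqrt (2 * π * N))) := by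
      rwa [Real.exp_add, Real.exp_log hsN]
    have := Real.exp_lt_exp.mp hfin
    linarith
end

section
/- Let a, b, A > 0, P_max > 0, f(z) = A·(z+b)/log₂(1+az) on (0, P_max], and y₀ = 1 + a·P_max. If y₀·ln(y₀) − y₀ − (ab−1) ≤ 0, then f attains its minimum on (0, P_max] at z = P_max. -/
open Real

theorem min_at_pmax (a b A Pmax : ℝ) (ha : 0 < a) (hb : 0 < b) (hA : 0 < A)
    (hP : 0 < Pmax) (f : ℝ → ℝ)
    (hf : ∀ z, f z = A * (z + b) / (Real.log (1 + a * z) / Real.log 2))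
    (y₀ : ℝ) (hy₀ : y₀ = 1 + a * Pmax)
    (hcond : y₀ * Real.log y₀ - y₀ - (a * b - 1) ≤ 0) :
    ∀ z ∈ Set.Ioc 0 Pmax, f Pmax ≤ f z := by
  intro z hz
  obtain ⟨hz0, hzP⟩ := hz
  have hy₀1 : 1 < y₀ := by rw [hy₀]; nlinarith
  -- auxiliary monotone function t ↦ t log t - t on [1, y₀]
  have haux : MonotoneOn (fun t => t * Real.log t - t) (Set.Icc 1 y₀) := by
    apply monotoneOn_of_deriv_nonneg (convex_Icc 1 y₀)
    · apply ContinuousOn.sub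
      · exact continuousOn_id.mul (Real.continuousOn_log.mono
          (fun t ht => ne_of_gt (lt_of_lt_of_le one_pos ht.1)))
      · exact continuousOn_id
    · intro t ht
      rw [interior_Icc] at ht
      exact ((differentiable_id.differentiableAt.mul
        (Real.differentiableAt_log (ne_of_gt (lt_trans one_pos ht.1)))).sub
        differentiable_id.differentiableAt).differentiableWithinAt
    · intro t ht
      rw [interior_Icc] at ht
      have ht1 : 1 < t := ht.1
      have ht0 : t ≠ 0 := ne_of_gt (lt_trans one_pos ht1)
      have hder : HasDerivAt (fun t => t * Real.log t - t)
          ((1 * Real.log t + t * t⁻¹) - 1) t :=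
        ((hasDerivAt_id t).mul (Real.hasDerivAt_log ht0)).sub (hasDerivAt_id t)
      rw [hder.deriv, mul_inv_cancel₀ ht0]
      have := Real.log_nonneg (le_of_lt ht1)
      linarith
  -- g antitone on (1, y₀]
  set g : ℝ → ℝ := fun y => (y + (a * b - 1)) / Real.log y with hg
  have hanti : AntitoneOn g (Set.Ioc 1 y₀) := by
    apply antitoneOn_of_deriv_nonpos (convex_Ioc 1 y₀)
    · apply ContinuousOn.div
      · exact continuousOn_id.add continuousOn_const
      · exact Real.continuousOn_log.mono (fun y hy => ne_of_gt (lt_trans one_pos hy.1))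
      · exact fun y hy => ne_of_gt (Real.log_pos hy.1)
    · intro y hy
      rw [interior_Ioc] at hy
      have hy0 : y ≠ 0 := ne_of_gt (lt_trans one_pos hy.1)
      have hlog : Real.log y ≠ 0 := ne_of_gt (Real.log_pos hy.1)
      exact ((differentiable_id.differentiableAt.add_const _).div
        (Real.differentiableAt_log hy0) hlog).differentiableWithinAt
    · intro y hy
      rw [interior_Ioc] at hy
      have hy1 : 1 < y := hy.1
      have hypos : 0 < y := lt_trans one_pos hy1
      have hy0 : y ≠ 0 := ne_of_gt hypos
      have hlogpos : 0 < Real.log y := Real.log_pos hy1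
      have hder : HasDerivAt g
          ((1 * Real.log y - (y + (a * b - 1)) * y⁻¹) / (Real.log y) ^ 2) y :=
        ((hasDerivAt_id y).add_const _).div (Real.hasDerivAt_log hy0) (ne_of_gt hlogpos)
      rw [hder.deriv]
      apply div_nonpos_of_nonpos_of_nonneg _ (sq_nonneg _)
      have hmem1 : y ∈ Set.Icc 1 y₀ := ⟨le_of_lt hy1, le_of_lt hy.2⟩
      have hmem2 : y₀ ∈ Set.Icc 1 y₀ := ⟨le_of_lt hy₀1, le_refl _⟩
      have hm := haux hmem1 hmem2 (le_of_lt hy.2)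
      simp only at hm
      have hkey : y * Real.log y ≤ y + (a * b - 1) := by linarith
      have hle : Real.log y ≤ (y + (a * b - 1)) * y⁻¹ := by
        rw [← div_eq_mul_inv, le_div_iff₀ hypos]
        nlinarith [hkey]
      linarith
  -- apply antitonicity
  have hy1z : 1 < 1 + a * z := by nlinarith
  have hyz_mem : (1 + a * z) ∈ Set.Ioc 1 y₀ := ⟨hy1z, by rw [hy₀]; nlinarith⟩
  have hy₀_mem : y₀ ∈ Set.Ioc 1 y₀ := ⟨hy₀1, le_refl _⟩
  have hgle : g y₀ ≤ g (1 + a * z) := hanti hyz_mem hy₀_mem hyz_mem.2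
  have hL1 : 0 < Real.log y₀ := Real.log_pos hy₀1
  have hL2 : 0 < Real.log (1 + a * z) := Real.log_pos hy1z
  have hlog2 : 0 < Real.log 2 := Real.log_pos one_lt_two
  have hkey : a * (Pmax + b) / Real.log y₀ ≤ a * (z + b) / Real.log (1 + a * z) := by
    have e1 : y₀ + (a * b - 1) = a * (Pmax + b) := by rw [hy₀]; ring
    have e2 : (1 + a * z) + (a * b - 1) = a * (z + b) := by ring
    have h := hgle
    simp only [hg] at h
    rw [e1, e2] at h
    exact h
  have hkey' : a * (Pmax + b) * Real.log (1 + a * z) ≤ a * (z + b) * Real.log y₀ :=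
    (div_le_div_iff₀ hL1 hL2).mp hkey
  have h3 : (Pmax + b) * Real.log (1 + a * z) ≤ (z + b) * Real.log y₀ := by
    have h := hkey'
    rw [mul_assoc, mul_assoc] at h
    exact (mul_le_mul_iff_right₀ ha).mp h
  rw [hf Pmax, hf z, div_div_eq_mul_div, div_div_eq_mul_div, ← hy₀,
    div_le_div_iff₀ hL1 hL2]
  nlinarith [mul_le_mul_of_nonneg_left h3 (mul_pos hA hlog2).le]
end

section
/- Let a, b, A > 0 and f(z) = A·(z+b)/log₂(1+az) on (0, ∞). If y* > 1 satisfies y*·ln(y*) − y* = ab − 1, then z* = (y* − 1)/a is the unique global minimizer of f on (0, ∞). -/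
open Real

theorem unique_global_minimizer (a b A : ℝ) (ha : 0 < a) (hb : 0 < b) (hA : 0 < A)
    (f : ℝ → ℝ)
    (hf : ∀ z, f z = A * (z + b) / (Real.log (1 + a * z) / Real.log 2))
    (ystar : ℝ) (hy : 1 < ystar)
    (hcond : ystar * Real.log ystar - ystar = a * b - 1)
    (zstar : ℝ) (hz : zstar = (ystar - 1) / a) :
    ∀ z > 0, z ≠ zstar → f zstar < f z := by
  intro z hz0 hzne
  have h2 : (0:ℝ) < Real.log 2 := Real.log_pos one_lt_two
  set y := 1 + a * z with hy_def
  have hy1 : 1 < y := by nlinarith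
  have hylog : 0 < Real.log y := Real.log_pos hy1
  have hys : 0 < ystar := lt_trans one_pos hy
  have hyslog : 0 < Real.log ystar := Real.log_pos hy
  have hyzs : 1 + a * zstar = ystar := by
    rw [hz]; field_simp; ring
  have hyne : y ≠ ystar := by
    intro h
    apply hzne
    rw [hz]
    field_simp
    nlinarith
  -- key inequality: ystar * log y < y - 1 + a*b
  have hkey : ystar * Real.log y < y - 1 + a * b := by
    have ht : Real.log (y / ystar) < y / ystar - 1 :=
      Real.log_lt_sub_one_of_pos (by positivity)
        (fun h => hyne ((div_eq_one_iff_eq (ne_of_gt hys)).mp h))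
    rw [Real.log_div (ne_of_gt (by linarith)) (ne_of_gt hys)] at ht
    have h3 := mul_lt_mul_of_pos_left ht hys
    have heq : ystar * (y / ystar - 1) = y - ystar := by field_simp
    nlinarith
  have hzsb : a * (zstar + b) = ystar * Real.log ystar := by
    rw [hz]; field_simp; nlinarith
  have hmain : A * (zstar + b) * Real.log y < A * (z + b) * Real.log ystar := by
    have h4 : a * (z + b) = y - 1 + a * b := by rw [hy_def]; ring
    have h5 : (A * Real.log ystar) * (ystar * Real.log y)
        < (A * Real.log ystar) * (y - 1 + a * b) :=
      mul_lt_mul_of_pos_left hkey (by positivity)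
    have e1 : a * (A * (zstar + b) * Real.log y)
        = (A * Real.log ystar) * (ystar * Real.log y) := by
      rw [show a * (A * (zstar + b) * Real.log y)
          = (a * (zstar + b)) * (A * Real.log y) by ring, hzsb]
      ring
    have e2 : a * (A * (z + b) * Real.log ystar)
        = (A * Real.log ystar) * (y - 1 + a * b) := by
      rw [show a * (A * (z + b) * Real.log ystar)
          = (a * (z + b)) * (A * Real.log ystar) by ring, h4]
      ring
    have h7 : a * (A * (zstar + b) * Real.log y)
        < a * (A * (z + b) * Real.log ystar) := by rw [e1, e2]; exact h5
    exact lt_of_mul_lt_mul_left h7 ha.le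
  rw [hf, hf, hyzs]
  rw [div_lt_div_iff₀ (by positivity) (by positivity)]
  calc A * (zstar + b) * (Real.log y / Real.log 2)
      = A * (zstar + b) * Real.log y / Real.log 2 := by ring
    _ < A * (z + b) * Real.log ystar / Real.log 2 := by gcongr
    _ = A * (z + b) * (Real.log ystar / Real.log 2) := by ring
end

section
/- In the optimal solution of maximizing Σ_i p_r(i)(1 − e^{−c·p_i}) over the simplex with strictly decreasing positive weights p_r(i), the support of the optimal p* is a down-set: if p*_c(i) > 0 and j < i, then p*_c(j) > 0; moreover p*_c is nonincreasing in i. -/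
open Real Finset

theorem optimal_support_downset (N : ℕ) (hN : 0 < N) (c : ℝ) (hc : 0 < c)
    (pr : Fin N → ℝ) (hpos : ∀ i, 0 < pr i)
    (hdec : ∀ i j : Fin N, i < j → pr j < pr i)
    (p : Fin N → ℝ) (hp0 : ∀ i, 0 ≤ p i) (hp1 : ∑ i, p i = 1)
    (hopt : ∀ q : Fin N → ℝ, (∀ i, 0 ≤ q i) → ∑ i, q i = 1 →
      ∑ i, pr i * (1 - Real.exp (-c * q i)) ≤ ∑ i, pr i * (1 - Real.exp (-c * p i))) :
    (∀ i j : Fin N, j < i → 0 < p i → 0 < p j) ∧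
    (∀ i j : Fin N, i ≤ j → p j ≤ p i) := by
  have key : ∀ i j : Fin N, j < i → p i ≤ p j := by
    intro i j hji
    by_contra h
    push_neg at h
    set q : Fin N → ℝ := p ∘ Equiv.swap i j with hq
    have hij : i ≠ j := ne_of_gt hji
    have hq0 : ∀ k, 0 ≤ q k := fun k => hp0 _
    have hq1 : ∑ k, q k = 1 := by
      rw [← hp1]; exact Equiv.sum_comp (Equiv.swap i j) p
    have hle := hopt q hq0 hq1
    have hqi : q i = p j := by simp [hq, Equiv.swap_apply_left]
    have hqj : q j = p i := by simp [hq, Equiv.swap_apply_right]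
    have hother : ∀ k, k ≠ i → k ≠ j → q k = p k := fun k h1 h2 => by
      simp [hq, Equiv.swap_apply_of_ne_of_ne h1 h2]
    set d : Fin N → ℝ :=
      fun k => pr k * (1 - Real.exp (-c * q k)) - pr k * (1 - Real.exp (-c * p k)) with hd
    have hzero : ∀ k ∈ Finset.univ, k ∉ ({i, j} : Finset (Fin N)) → d k = 0 := by
      intro k _ hk
      simp only [Finset.mem_insert, Finset.mem_singleton, not_or] at hk
      simp [hd, hother k hk.1 hk.2]
    have hsum : ∑ k, d k = ∑ k ∈ ({i, j} : Finset (Fin N)), d k :=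
      (Finset.sum_subset (Finset.subset_univ _) hzero).symm
    have hpair : ∑ k ∈ ({i, j} : Finset (Fin N)), d k = d i + d j :=
      Finset.sum_pair hij
    have hsub : ∑ k, d k =
        ∑ k, pr k * (1 - Real.exp (-c * q k)) - ∑ k, pr k * (1 - Real.exp (-c * p k)) := by
      rw [Finset.sum_sub_distrib]
    have hval : d i + d j = (pr i - pr j) * (Real.exp (-c * p i) - Real.exp (-c * p j)) := by
      simp only [hd, hqi, hqj]; ring
    have hle0 : (pr i - pr j) * (Real.exp (-c * p i) - Real.exp (-c * p j)) ≤ 0 := by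
      rw [← hval, ← hpair, ← hsum, hsub]; linarith
    have h1 : pr i - pr j < 0 := sub_neg.mpr (hdec j i hji)
    have h2 : Real.exp (-c * p i) - Real.exp (-c * p j) < 0 := by
      have : (-c * p i) < (-c * p j) := by nlinarith
      have := Real.exp_lt_exp.mpr this
      linarith
    nlinarith
  constructor
  · intro i j hji hpi
    exact lt_of_lt_of_le hpi (key i j hji)
  · intro i j hij
    rcases eq_or_lt_of_le hij with h | h
    · rw [h]
    · exact key j i h
end

section
/- For the truncated optimal caching distribution p*_c(i) = (β/(c·i*))·Σ_{j=1}^{i*} ln(j/i) + 1/i* for i ≤ i* and p*_c(i) = 0 for i > i*, where i* satisfies (β/c)·ln((i*)^{i*}/i*!) < 1, all entries with i ≤ i* are positive and Σ_{i=1}^{N_f} p*_c(i) = 1. -/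
open Real Finset

theorem truncated_caching_valid (N : ℕ) (β c : ℝ) (hβ : 0 < β) (hc : 0 < c)
    (istar : ℕ) (h1 : 1 ≤ istar) (h2 : istar ≤ N)
    (hcond : β / c * Real.log (((istar : ℕ) : ℝ) ^ istar / (Nat.factorial istar)) < 1)
    (p : ℕ → ℝ)
    (hp : ∀ i, p i = if i ≤ istar then
      β / (c * istar) * (∑ j ∈ Finset.Icc 1 istar, Real.log ((j : ℝ) / i)) + 1 / istar
      else 0) :
    (∀ i ∈ Finset.Icc 1 istar, 0 < p i) ∧ ∑ i ∈ Finset.Icc 1 N, p i = 1 := by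
  have his : (0:ℝ) < (istar:ℝ) := by exact_mod_cast h1
  set L : ℝ := ∑ j ∈ Finset.Icc 1 istar, Real.log j with hL
  have hS : ∀ i : ℕ, 1 ≤ i →
      (∑ j ∈ Finset.Icc 1 istar, Real.log ((j:ℝ)/i)) = L - istar * Real.log i := by
    intro i hi
    have hi0 : (0:ℝ) < (i:ℝ) := by exact_mod_cast hi
    have : ∀ j ∈ Finset.Icc 1 istar, Real.log ((j:ℝ)/i) = Real.log j - Real.log i := by
      intro j hj
      simp only [Finset.mem_Icc] at hj
      have : (0:ℝ) < (j:ℝ) := by exact_mod_cast hj.1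
      exact Real.log_div (ne_of_gt this) (ne_of_gt hi0)
    rw [Finset.sum_congr rfl this, Finset.sum_sub_distrib, Finset.sum_const, Nat.card_Icc]
    simp [hL, mul_comm]
  have hfact : Real.log ((Nat.factorial istar : ℝ)) = L := by
    have : ((Nat.factorial istar : ℕ) : ℝ) = ∏ j ∈ Finset.Icc 1 istar, (j:ℝ) := by
      rw [← Finset.Ico_add_one_right_eq_Icc, Finset.prod_Ico_eq_prod_range,
        ← Finset.prod_range_add_one_eq_factorial]
      push_cast
      simp [add_comm]
    rw [this, Real.log_prod]
    intro j hj
    simp only [Finset.mem_Icc] at hj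
    exact_mod_cast Nat.one_le_iff_ne_zero.mp hj.1
  have hcond' : β / c * ((istar:ℝ) * Real.log istar - L) < 1 := by
    have hne1 : ((istar:ℝ)) ^ istar ≠ 0 := by positivity
    have hne2 : ((Nat.factorial istar : ℕ) : ℝ) ≠ 0 := by
      exact_mod_cast Nat.factorial_ne_zero istar
    rw [Real.log_div hne1 hne2, Real.log_pow, hfact] at hcond
    convert hcond using 3
  constructor
  · intro i hi
    simp only [Finset.mem_Icc] at hi
    rw [hp i, if_pos hi.2, hS i hi.1]
    have hlog_le : Real.log i ≤ Real.log istar := by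
      apply Real.log_le_log (by exact_mod_cast hi.1)
      exact_mod_cast hi.2
    have hSgt : L - (istar:ℝ) * Real.log i > -(c/β) := by
      have h3 : (istar:ℝ) * Real.log istar - L < c / β := by
        rw [div_mul_eq_mul_div, div_lt_one hc] at hcond'
        rw [lt_div_iff₀ hβ]
        nlinarith
      have : (istar:ℝ) * Real.log i ≤ (istar:ℝ) * Real.log istar :=
        mul_le_mul_of_nonneg_left hlog_le (le_of_lt his)
      linarith
    have hpos : 0 < β / (c * istar) := by positivity
    have := mul_lt_mul_of_pos_left hSgt hpos
    have heq : β / (c * istar) * (-(c/β)) = -(1/(istar:ℝ)) := by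
      field_simp
    nlinarith [this, heq]
  · have hsub : Finset.Icc 1 istar ⊆ Finset.Icc 1 N := Finset.Icc_subset_Icc_right h2
    rw [← Finset.sum_subset hsub (by
      intro i hiN hinot
      simp only [Finset.mem_Icc] at hiN hinot
      rw [hp i, if_neg]
      omega)]
    have hcongr : ∀ i ∈ Finset.Icc 1 istar,
        p i = β / (c * istar) * (L - istar * Real.log i) + 1 / istar := by
      intro i hi
      simp only [Finset.mem_Icc] at hi
      rw [hp i, if_pos hi.2, hS i hi.1]
    rw [Finset.sum_congr rfl hcongr]
    rw [Finset.sum_add_distrib, ← Finset.mul_sum, Finset.sum_sub_distrib,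
      Finset.sum_const, ← Finset.mul_sum, Nat.card_Icc]
    simp only [Nat.add_sub_cancel]
    rw [← hL]
    have : (istar:ℝ) ≠ 0 := ne_of_gt his
    field_simp
    simp only [nsmul_eq_mul, Finset.sum_const, Nat.card_Icc, Nat.add_sub_cancel]
    rw [sub_self, mul_zero, zero_add, mul_one_div_cancel this, mul_one]
end
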